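/- Let X be a topological vector space and T : X → X a continuous linear operator. If T is power bounded, i.e. the family (T^n)_{n≥0} is equicontinuous, then the sets URec(T), FRec(T), UFRec(T), RRec(T) and Rec(T) of uniformly recurrent, frequently recurrent, upper frequently recurrent, reiteratively recurrent and recurrent vectors, respectively, are closed in X. -/

import Mathlib

open Filter Topology Set

noncomputable def lowerDensity (A : Set ℕ) : ℝ :=
  Filter.atTop.liminf fun N : ℕ => ((A ∩ Set.Iic N).ncard : ℝ) / (N + 1)

noncomputable def upperDensity (A : Set ℕ) : ℝ :=
  Filter.atTop.limsup fun N : ℕ => ((A ∩ Set.Iic N).ncard : ℝ) / (N + 1)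

noncomputable def upperBanachDensity (A : Set ℕ) : ℝ :=
  Filter.atTop.limsup fun N : ℕ =>
    ⨆ m : ℕ, (((A ∩ Set.Icc m (m + N)).ncard : ℝ) / (N + 1))

/-- A set of naturals is syndetic if it has bounded gaps. -/
def Syndetic (A : Set ℕ) : Prop :=
  ∃ m : ℕ, ∀ n : ℕ, ∃ k ∈ A, n ≤ k ∧ k < n + m

/-- A set of naturals is an IP-set if it contains all finite sums of distinct terms of some
strictly increasing sequence of positive integers. -/
def IsIPSet (A : Set ℕ) : Prop :=
  ∃ k : ℕ → ℕ, StrictMono k ∧ (∀ i, 0 < k i) ∧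
    ∀ s : Finset ℕ, s.Nonempty → (∑ j ∈ s, k j) ∈ A

/-- A set of naturals is an IP*-set if it meets every IP-set. -/
def IsIPStarSet (A : Set ℕ) : Prop :=
  ∀ B : Set ℕ, IsIPSet B → (A ∩ B).Nonempty

/-- The return set N(x,U) = {n : T^n x ∈ U}. -/
def returnSet {X : Type*} (T : X → X) (x : X) (U : Set X) : Set ℕ :=
  {n : ℕ | T^[n] x ∈ U}

def IsRecurrentVec {X : Type*} [TopologicalSpace X] (T : X → X) (x : X) : Prop :=
  ∀ U ∈ nhds x, (returnSet T x U).Infinite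

def IsUniformlyRecurrentVec {X : Type*} [TopologicalSpace X] (T : X → X) (x : X) : Prop :=
  ∀ U ∈ nhds x, Syndetic (returnSet T x U)

def IsFrequentlyRecurrentVec {X : Type*} [TopologicalSpace X] (T : X → X) (x : X) : Prop :=
  ∀ U ∈ nhds x, 0 < lowerDensity (returnSet T x U)

def IsUpperFrequentlyRecurrentVec {X : Type*} [TopologicalSpace X] (T : X → X) (x : X) : Prop :=
  ∀ U ∈ nhds x, 0 < upperDensity (returnSet T x U)

def IsReiterativelyRecurrentVec {X : Type*} [TopologicalSpace X] (T : X → X) (x : X) : Prop :=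
  ∀ U ∈ nhds x, 0 < upperBanachDensity (returnSet T x U)

def IsIPStarRecurrentVec {X : Type*} [TopologicalSpace X] (T : X → X) (x : X) : Prop :=
  ∀ U ∈ nhds x, IsIPStarSet (returnSet T x U)

def IsHypercyclicVec {X : Type*} [TopologicalSpace X] (T : X → X) (x : X) : Prop :=
  Dense (Set.range fun n : ℕ => T^[n] x)

def IsFrequentlyHypercyclicVec {X : Type*} [TopologicalSpace X] (T : X → X) (x : X) : Prop :=
  ∀ U : Set X, IsOpen U → U.Nonempty → 0 < lowerDensity (returnSet T x U)

def IsUpperFrequentlyHypercyclicVec {X : Type*} [TopologicalSpace X] (T : X → X) (x : X) : Prop :=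
  ∀ U : Set X, IsOpen U → U.Nonempty → 0 < upperDensity (returnSet T x U)

def IsReiterativelyHypercyclicVec {X : Type*} [TopologicalSpace X] (T : X → X) (x : X) : Prop :=
  ∀ U : Set X, IsOpen U → U.Nonempty → 0 < upperBanachDensity (returnSet T x U)

/-- Power boundedness: the iterates form an equicontinuous family (at zero). -/
def PowerBounded {X : Type*} [Zero X] [TopologicalSpace X] (T : X → X) : Prop :=
  ∀ W₁ ∈ nhds (0 : X), ∃ W₂ ∈ nhds (0 : X), ∀ n : ℕ, ∀ x ∈ W₂, T^[n] x ∈ W₁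

/-- The cut-shift-and-paste property for a family of subsets of ℕ. -/
def CuSP (F : Set ℕ → Prop) : Prop :=
  ∀ q : ℕ, 0 < q → ∀ I : Fin q → Set ℕ, (⋃ j, I j) = Set.univ →
    ∀ shift : Fin q → ℕ, ∀ A : Set ℕ, F A →
      F (⋃ j, (fun k => shift j + k) '' (A ∩ I j))

lemma aux_ncard_Iic (N : ℕ) : (Set.Iic N).ncard = N + 1 := by
  rw [← Nat.card_coe_set_eq, Nat.card_eq_card_toFinset]; simp

lemma aux_ncard_Icc (m N : ℕ) : (Set.Icc m (m+N)).ncard = N + 1 := by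
  rw [← Nat.card_coe_set_eq, Nat.card_eq_card_toFinset]; simp; omega

lemma aux_f_nonneg (A : Set ℕ) (N : ℕ) : 0 ≤ ((A ∩ Set.Iic N).ncard : ℝ) / (N + 1) := by
  positivity

lemma aux_f_le_one (A : Set ℕ) (N : ℕ) : ((A ∩ Set.Iic N).ncard : ℝ) / (N + 1) ≤ 1 := by
  rw [div_le_one (by positivity)]
  have : (A ∩ Set.Iic N).ncard ≤ N + 1 := by
    rw [← aux_ncard_Iic N]
    exact Set.ncard_le_ncard inter_subset_right (Set.finite_Iic N)
  exact_mod_cast by exact_mod_cast (Nat.cast_le.mpr this).trans_eq (by push_cast; ring)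

lemma aux_g_le_one (A : Set ℕ) (N m : ℕ) : ((A ∩ Set.Icc m (m+N)).ncard : ℝ) / (N + 1) ≤ 1 := by
  rw [div_le_one (by positivity)]
  have : (A ∩ Set.Icc m (m+N)).ncard ≤ N + 1 := by
    rw [← aux_ncard_Icc m N]
    exact Set.ncard_le_ncard inter_subset_right (Set.finite_Icc _ _)
  exact_mod_cast by exact_mod_cast (Nat.cast_le.mpr this).trans_eq (by push_cast; ring)

lemma aux_f_mono {A B : Set ℕ} (h : A ⊆ B) (N : ℕ) :
    ((A ∩ Set.Iic N).ncard : ℝ) / (N + 1) ≤ ((B ∩ Set.Iic N).ncard : ℝ) / (N + 1) := by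
  gcongr
  all_goals first
    | exact Set.ncard_le_ncard (Set.inter_subset_inter_left _ h) ((Set.finite_Iic N).inter_of_right _)
    | exact (Set.finite_Iic N).inter_of_right _

lemma aux_g_mono {A B : Set ℕ} (h : A ⊆ B) (N m : ℕ) :
    ((A ∩ Set.Icc m (m+N)).ncard : ℝ) / (N + 1) ≤ ((B ∩ Set.Icc m (m+N)).ncard : ℝ) / (N + 1) := by
  gcongr
  all_goals first
    | exact Set.ncard_le_ncard (Set.inter_subset_inter_left _ h) ((Set.finite_Icc _ _).inter_of_right _)
    | exact (Set.finite_Icc _ _).inter_of_right _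

lemma lowerDensity_mono {A B : Set ℕ} (h : A ⊆ B) : lowerDensity A ≤ lowerDensity B := by
  exact Filter.liminf_le_liminf (Filter.Eventually.of_forall (aux_f_mono h))
    (Filter.isBoundedUnder_of ⟨0, fun N => aux_f_nonneg A N⟩)
    ((Filter.isBoundedUnder_of ⟨1, fun N => aux_f_le_one B N⟩).isCoboundedUnder_ge)

lemma upperDensity_mono {A B : Set ℕ} (h : A ⊆ B) : upperDensity A ≤ upperDensity B := by
  have h0 : Filter.IsBoundedUnder (· ≥ ·) Filter.atTop
      (fun N : ℕ => ((A ∩ Set.Iic N).ncard : ℝ) / (N + 1)) :=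
    Filter.isBoundedUnder_of ⟨0, fun N => aux_f_nonneg A N⟩
  exact Filter.limsup_le_limsup (Filter.Eventually.of_forall (aux_f_mono h))
    h0.isCoboundedUnder_le
    (Filter.isBoundedUnder_of ⟨1, fun N => aux_f_le_one B N⟩)

lemma upperBanachDensity_mono {A B : Set ℕ} (h : A ⊆ B) :
    upperBanachDensity A ≤ upperBanachDensity B := by
  have hptwise : ∀ N : ℕ,
      (⨆ m : ℕ, ((A ∩ Set.Icc m (m + N)).ncard : ℝ) / (N + 1)) ≤
      ⨆ m : ℕ, ((B ∩ Set.Icc m (m + N)).ncard : ℝ) / (N + 1) := by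
    intro N
    exact ciSup_mono ⟨1, by rintro _ ⟨m, rfl⟩; exact aux_g_le_one B N m⟩ (fun m => aux_g_mono h N m)
  have hub : ∀ (C : Set ℕ) (N : ℕ),
      (⨆ m : ℕ, ((C ∩ Set.Icc m (m + N)).ncard : ℝ) / (N + 1)) ≤ 1 := by
    intro C N
    exact ciSup_le fun m => aux_g_le_one C N m
  have hlb : ∀ (C : Set ℕ) (N : ℕ),
      (0:ℝ) ≤ ⨆ m : ℕ, ((C ∩ Set.Icc m (m + N)).ncard : ℝ) / (N + 1) := by
    intro C N
    exact le_ciSup_of_le ⟨1, by rintro _ ⟨m, rfl⟩; exact aux_g_le_one C N m⟩ 0 (by positivity)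
  have h0 : Filter.IsBoundedUnder (· ≥ ·) Filter.atTop
      (fun N : ℕ => ⨆ m : ℕ, ((A ∩ Set.Icc m (m + N)).ncard : ℝ) / (N + 1)) :=
    Filter.isBoundedUnder_of ⟨0, fun N => hlb A N⟩
  exact Filter.limsup_le_limsup (Filter.Eventually.of_forall hptwise)
    h0.isCoboundedUnder_le
    (Filter.isBoundedUnder_of ⟨1, fun N => hub B N⟩)

lemma aux_iter_sub {𝕜 : Type*} [RCLike 𝕜] {X : Type*} [AddCommGroup X] [Module 𝕜 X]
    [TopologicalSpace X] (T : X →L[𝕜] X) (n : ℕ) (a b : X) :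
    (⇑T)^[n] (a - b) = (⇑T)^[n] a - (⇑T)^[n] b := by
  induction n generalizing a b with
  | zero => simp
  | succ n ih => simp [Function.iterate_succ_apply, map_sub, ih]

lemma key_closed {𝕜 : Type*} [RCLike 𝕜] {X : Type*} [AddCommGroup X] [Module 𝕜 X]
    [TopologicalSpace X] [IsTopologicalAddGroup X] [ContinuousSMul 𝕜 X] (T : X →L[𝕜] X)
    (h : PowerBounded (⇑T)) (P : Set ℕ → Prop)
    (hmono : ∀ {A B : Set ℕ}, A ⊆ B → P A → P B) :
    IsClosed {x : X | ∀ U ∈ nhds x, P (returnSet (⇑T) x U)} := by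
  refine isClosed_of_closure_subset ?_
  intro x hx U hU
  -- W : preimage of U under translation by x
  have hW : (fun w : X => x + w) ⁻¹' U ∈ nhds (0 : X) := by
    apply ContinuousAt.preimage_mem_nhds (by fun_prop)
    simpa using hU
  set W : Set X := (fun w : X => x + w) ⁻¹' U with hWdef
  obtain ⟨V, hV, hVadd⟩ := exists_nhds_zero_half hW
  obtain ⟨V', hV', hV'add⟩ := exists_nhds_zero_half hV
  have hV'subV : V' ⊆ V := fun v hv => by simpa using hV'add v hv 0 (mem_of_mem_nhds hV')
  have htriple : ∀ a ∈ V', ∀ b ∈ V', ∀ c ∈ V', a + b + c ∈ W := by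
    intro a ha b hb c hc
    exact hVadd (a + b) (hV'add a ha b hb) c (hV'subV hc)
  -- symmetric neighbourhood inside V'
  set W'' : Set X := V' ∩ (Neg.neg ⁻¹' V') with hW''def
  have hW''nhds : W'' ∈ nhds (0 : X) := by
    refine Filter.inter_mem hV' ?_
    apply ContinuousAt.preimage_mem_nhds (by fun_prop)
    simpa using hV'
  obtain ⟨W₂, hW₂nhds, hW₂⟩ := h W'' hW''nhds
  -- pick y in the set close to x
  have hnbr : {y : X | y - x ∈ W₂ ∩ W''} ∈ nhds x := by
    apply ContinuousAt.preimage_mem_nhds (x := x) (by fun_prop)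
    simpa using Filter.inter_mem hW₂nhds hW''nhds
  obtain ⟨y, hy1, hy2⟩ := mem_closure_iff_nhds.1 hx _ hnbr
  obtain ⟨hd₂, hd''⟩ : y - x ∈ W₂ ∧ y - x ∈ W'' := ⟨hy1.1, hy1.2⟩
  -- return set of y for its neighbourhood {z | z - y ∈ W''}
  have hVy : {z : X | z - y ∈ W''} ∈ nhds y := by
    apply ContinuousAt.preimage_mem_nhds (x := y) (by fun_prop)
    simpa using hW''nhds
  have hPy : P (returnSet (⇑T) y {z : X | z - y ∈ W''}) := hy2 _ hVy
  refine hmono ?_ hPy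
  intro n hn
  -- hn : T^[n] y - y ∈ W''
  have hTd : (⇑T)^[n] (y - x) ∈ W'' := hW₂ n _ hd₂
  have ha : (⇑T)^[n] y - y ∈ V' := hn.1
  have hb : -((⇑T)^[n] (y - x)) ∈ V' := hTd.2
  have hc : y - x ∈ V' := hd''.1
  have hmemW : ((⇑T)^[n] y - y) + (-((⇑T)^[n] (y - x))) + (y - x) ∈ W :=
    htriple _ ha _ hb _ hc
  have hx' : (⇑T)^[n] x = x + (((⇑T)^[n] y - y) + (-((⇑T)^[n] (y - x))) + (y - x)) := by
    rw [aux_iter_sub]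
    abel
  show (⇑T)^[n] x ∈ U
  rw [hx']
  exact hmemW

theorem stmt7 {𝕜 : Type*} [RCLike 𝕜] {X : Type*} [AddCommGroup X] [Module 𝕜 X]
    [TopologicalSpace X] [IsTopologicalAddGroup X] [ContinuousSMul 𝕜 X] (T : X →L[𝕜] X) (h : PowerBounded (⇑T)) :
    IsClosed {x : X | IsUniformlyRecurrentVec (⇑T) x} ∧
    IsClosed {x : X | IsFrequentlyRecurrentVec (⇑T) x} ∧
    IsClosed {x : X | IsUpperFrequentlyRecurrentVec (⇑T) x} ∧
    IsClosed {x : X | IsReiterativelyRecurrentVec (⇑T) x} ∧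
    IsClosed {x : X | IsRecurrentVec (⇑T) x} := by
  refine ⟨?_, ?_, ?_, ?_, ?_⟩
  · exact key_closed T h Syndetic (fun {A B} hAB ⟨m, hm⟩ =>
      ⟨m, fun n => let ⟨k, hk, h1, h2⟩ := hm n; ⟨k, hAB hk, h1, h2⟩⟩)
  · exact key_closed T h (fun A => 0 < lowerDensity A)
      (fun {A B} hAB hA => hA.trans_le (lowerDensity_mono hAB))
  · exact key_closed T h (fun A => 0 < upperDensity A)
      (fun {A B} hAB hA => hA.trans_le (upperDensity_mono hAB))
  · exact key_closed T h (fun A => 0 < upperBanachDensity A)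
      (fun {A B} hAB hA => hA.trans_le (upperBanachDensity_mono hAB))
  · exact key_closed T h Set.Infinite (fun {A B} hAB hA => hA.mono hAB)
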